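/- Fix a vertex μ. Let F = fE be a nonzero antinef divisor with factorization vector f̂, and let G be an antinef divisor. Then for every vertex ν of Γ, λ(G, f̂_{⟨f̂⟩}·V·E; ν) ≥ λ(G, fE; ν), and equality holds exactly when either d(μ,ν) ≤ 1, or f̂_j = 0 for every j ∈ Γ^i_ν, where i is the vertex of the path [μ,ν] adjacent to μ. -/

import Mathlib

open Matrix BigOperators

open scoped Classical

noncomputable section

/-- Proximity data of a dual graph on vertex set `Fin N`, built from a single
root vertex by a finite sequence of elementary modifications. Vertices are
ordered by creation; each new vertex is proximate to at most two existing
(earlier) vertices, which must be adjacent to each other at that time if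
there are two of them. -/
structure DualGraph where
  N : ℕ
  Npos : 0 < N
  prox : Fin N → Fin N → Prop
  prox_lt : ∀ {μ ν}, prox μ ν → ν < μ
  prox_card : ∀ μ, {ν | prox μ ν}.ncard ≤ 2
  prox_nonempty : ∀ μ : Fin N, 0 < (μ : ℕ) → ∃ ν, prox μ ν
  prox_pair : ∀ {μ a b}, prox μ a → prox μ b → a ≠ b →
      (prox a b ∨ prox b a) ∧ ∀ ρ, ρ < μ → ¬(prox ρ a ∧ prox ρ b)

namespace DualGraph

variable (G : DualGraph)

/-- The proximity matrix `P`. -/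
def P : Matrix (Fin G.N) (Fin G.N) ℚ :=
  fun μ ν => if μ = ν then 1 else if G.prox μ ν then -1 else 0

/-- `Q = P⁻¹`. -/
def Q : Matrix (Fin G.N) (Fin G.N) ℚ := (G.P)⁻¹

/-- The valuation matrix `V = (PᵀP)⁻¹`. -/
def V : Matrix (Fin G.N) (Fin G.N) ℚ := (G.Pᵀ * G.P)⁻¹

/-- Adjacency in the dual graph: `μ ∼ ν` iff `(PᵀP)_{μν} = -1`. -/
def adj (μ ν : Fin G.N) : Prop := μ ≠ ν ∧ (G.Pᵀ * G.P) μ ν = -1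

lemma adj_symm {μ ν : Fin G.N} (h : G.adj μ ν) : G.adj ν μ := by
  obtain ⟨hne, h2⟩ := h
  refine ⟨hne.symm, ?_⟩
  have ht : (G.Pᵀ * G.P)ᵀ = G.Pᵀ * G.P := by
    rw [Matrix.transpose_mul, Matrix.transpose_transpose]
  calc (G.Pᵀ * G.P) ν μ = (G.Pᵀ * G.P)ᵀ μ ν := rfl
    _ = (G.Pᵀ * G.P) μ ν := by rw [ht]
    _ = -1 := h2

/-- The dual graph as a simple graph. -/
def graph : SimpleGraph (Fin G.N) where
  Adj := G.adj
  symm := ⟨fun _ _ h => G.adj_symm h⟩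
  loopless := ⟨fun μ h => h.1 rfl⟩

/-- The graph distance `d(μ,ν)`. -/
def dist (μ ν : Fin G.N) : ℕ := G.graph.dist μ ν

/-- The set of vertices on the unique path `[μ,γ]` from `μ` to `γ`. -/
def pathSet (μ γ : Fin G.N) : Finset (Fin G.N) :=
  Finset.univ.filter (fun ν => G.dist μ ν + G.dist ν γ = G.dist μ γ)

/-- The branch `Γ^μ_ν` emanating from `μ` towards `ν`: the maximal connected
subgraph of `Γ` containing `ν` but not `μ` (with `Γ^μ_μ = ∅`). -/
def branch (μ ν : Fin G.N) : Finset (Fin G.N) :=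
  Finset.univ.filter (fun η => ν ≠ μ ∧ η ≠ μ ∧ μ ∉ G.pathSet ν η)

/-- The set of vertices adjacent to `μ`. -/
def nbrs (μ : Fin G.N) : Finset (Fin G.N) := Finset.univ.filter (fun ν => G.adj μ ν)

/-- The valence `v_Γ(μ)`: the number of vertices adjacent to `μ`. -/
def valence (μ : Fin G.N) : ℕ := (G.nbrs μ).card

/-- The weight `w_Γ(μ) = (PᵀP)_{μμ}`. -/
def w (μ : Fin G.N) : ℚ := (G.Pᵀ * G.P) μ μ

/-- The canonical vector `k`, `k_ν = Σ_μ q_{νμ}`. -/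
def kvec : Fin G.N → ℚ := fun ν => ∑ μ, G.Q ν μ

/-- A divisor with valuation vector `f` is antinef iff its factorization
vector `f̂ = f PᵀP` is nonnegative. -/
def Antinef (f : Fin G.N → ℚ) : Prop := ∀ ν, 0 ≤ (f ᵥ* (G.Pᵀ * G.P)) ν

/-- `λ(fE, gE; ν) = (f_ν + k_ν + 1)/g_ν` for divisors with valuation
vectors `f`, `g`. -/
def lamDiv (f g : Fin G.N → ℚ) (ν : Fin G.N) : ℚ := (f ν + G.kvec ν + 1) / g ν

/-- `ρ_{[μ,γ]}(ν) = V_{γν}/V_{μν}`. -/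
def rho (μ γ ν : Fin G.N) : ℚ := G.V γ ν / G.V μ ν

/-- `r̂_{[μ,γ]} = 𝟙_γ − ρ_{[μ,γ]}(μ)·𝟙_μ`. -/
def rhat (μ γ : Fin G.N) : Fin G.N → ℚ :=
  fun j => (if j = γ then 1 else 0) - G.rho μ γ μ * (if j = μ then 1 else 0)

/-- `φ_η^{[μ,γ]}(ν) = (r̂_{[μ,γ]}V)_ν / V_{ην}`. -/
def phi (η μ γ ν : Fin G.N) : ℚ := (G.rhat μ γ ᵥ* G.V) ν / G.V η ν

/-- The transform `f̂_{⟨ĝ⟩[ĥ]}` relative to the vertex `μ`. -/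
def transform (μ : Fin G.N) (fh gh hh : Fin G.N → ℚ) : Fin G.N → ℚ :=
  fh - (∑ i ∈ G.nbrs μ, ∑ j ∈ G.branch μ i, gh j • G.rhat i j)
     + ∑ i ∈ G.nbrs μ, hh i • G.rhat μ i

/-- The transform `f̂^𝒩 = f̂ − Σ_i f̂_i·r̂_{[μ,i]}` relative to the vertex `μ`. -/
def nmap (μ : Fin G.N) (fh : Fin G.N → ℚ) : Fin G.N → ℚ :=
  fh - ∑ i, fh i • G.rhat μ i

/-- A vertex is free if it is proximate to at most one vertex. -/
def Free (μ : Fin G.N) : Prop := {ν | G.prox μ ν}.ncard ≤ 1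

/-- `μ` is infinitely near to `ν` (written `ν ⊂ μ`): the reflexive-transitive
closure of proximity. -/
def InfNear (μ ν : Fin G.N) : Prop := Relation.ReflTransGen G.prox μ ν

/-- The root vertex. -/
def root : Fin G.N := ⟨0, G.Npos⟩

/-- The branch `Γ^μ_ν` is anterior to `μ` if `μ` is infinitely near to some of
its vertices; otherwise it is posterior. -/
def Anterior (μ ν : Fin G.N) : Prop := ∃ η ∈ G.branch μ ν, G.InfNear μ η

/-- The pair `(γ,τ)` associated to `μ`. -/
def PairAssociated (γ τ μ : Fin G.N) : Prop :=
  G.InfNear τ γ ∧ G.InfNear μ τ ∧ G.Free τ ∧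
  (∀ ν, G.Free ν → G.InfNear μ ν → G.InfNear τ ν) ∧
  ((¬ G.Free γ ∧ ∀ ν, ¬ G.Free ν → G.InfNear τ ν → G.InfNear γ ν) ∨
   ((∀ ν, G.InfNear τ ν → G.Free ν) ∧ γ = G.root))

/-- The entries of `V` as natural numbers (they are positive integers). -/
def Vnat (μ ν : Fin G.N) : ℕ := (G.V μ ν).num.toNat

/-- The submonoid `SV^μ_ν` of `ℕ` generated by `{V_{μi} : i ∈ Γ^μ_ν ∪ {μ}}`. -/
def SVb (μ ν : Fin G.N) : AddSubmonoid ℕ :=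
  AddSubmonoid.closure ↑((insert μ (G.branch μ ν)).image (G.Vnat μ))

/-- `s^μ_ν = gcd{V_{μi} : i ∈ Γ^μ_ν ∪ {μ}}`. -/
def sgcd (μ ν : Fin G.N) : ℕ := (insert μ (G.branch μ ν)).gcd (G.Vnat μ)

/-- The submonoid `S^μ` of `ℕ` generated by the `s^μ_ν`, `ν ∈ Γ`. -/
def Ssg (μ : Fin G.N) : AddSubmonoid ℕ :=
  AddSubmonoid.closure (Set.range (fun ν => G.sgcd μ ν))

/-- The valuation vector `d = d̂V` of the ideal with factorization vector `d̂`. -/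
def dval (dh : Fin G.N → ℕ) : Fin G.N → ℚ := (fun i => (dh i : ℚ)) ᵥ* G.V

/-- `λ(a,ν) = (a + k_ν + 1)/d_ν`. -/
def lamA (dh : Fin G.N → ℕ) (a : ℚ) (ν : Fin G.N) : ℚ :=
  (a + G.kvec ν + 1) / G.dval dh ν

/-- The set of jumping numbers of the ideal with factorization vector `d̂`
supported at the vertex `μ`. -/
def Hset (dh : Fin G.N → ℕ) (μ : Fin G.N) : Set ℚ :=
  { ξ | ∃ f : Fin G.N → ℤ, G.Antinef (fun i => (f i : ℚ)) ∧
      (∀ ν, G.lamA dh (f μ : ℚ) μ ≤ G.lamA dh (f ν : ℚ) ν) ∧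
      ξ = G.lamA dh (f μ : ℚ) μ }

end DualGraph
end
noncomputable section
namespace DualGraph
open Finset

variable {G : DualGraph}

/-- The intersection matrix `M = PᵀP`. -/
def MM (G : DualGraph) : Matrix (Fin G.N) (Fin G.N) ℚ := G.Pᵀ * G.P

/-- The finset of vertices `σ` with `prox μ σ`. -/
def proxF (G : DualGraph) (μ : Fin G.N) : Finset (Fin G.N) :=
  Finset.univ.filter (fun σ => G.prox μ σ)

lemma P_diag (μ : Fin G.N) : G.P μ μ = 1 := by simp [DualGraph.P]

lemma prox_irrefl (μ : Fin G.N) : ¬ G.prox μ μ := fun h => lt_irrefl _ (G.prox_lt h)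

lemma P_apply_ne {μ ν : Fin G.N} (h : μ ≠ ν) :
    G.P μ ν = if G.prox μ ν then -1 else 0 := by simp [DualGraph.P, h]

lemma P_blockTriangular : G.P.BlockTriangular OrderDual.toDual := by
  intro i j hij
  have hij' : i < j := hij
  have h2 : ¬ G.prox i j := fun h => absurd (G.prox_lt h) (not_lt.2 hij'.le)
  simp [DualGraph.P, ne_of_lt hij', h2]

lemma detP : G.P.det = 1 := by
  rw [Matrix.det_of_lowerTriangular _ P_blockTriangular]
  simp [P_diag]

lemma isUnit_detP : IsUnit G.P.det := by rw [detP]; exact isUnit_one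

lemma PQ : G.P * G.Q = 1 := Matrix.mul_nonsing_inv _ isUnit_detP
lemma QP : G.Q * G.P = 1 := Matrix.nonsing_inv_mul _ isUnit_detP

lemma Q_rec (μ ρ : Fin G.N) :
    G.Q μ ρ = (if μ = ρ then (1:ℚ) else 0) + ∑ σ ∈ G.proxF μ, G.Q σ ρ := by
  have h : (G.P * G.Q) μ ρ = (1 : Matrix (Fin G.N) (Fin G.N) ℚ) μ ρ := by rw [PQ]
  rw [Matrix.mul_apply, Matrix.one_apply] at h
  have split : ∑ σ, G.P μ σ * G.Q σ ρ
      = G.P μ μ * G.Q μ ρ + ∑ σ ∈ Finset.univ.erase μ, G.P μ σ * G.Q σ ρ :=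
    (Finset.add_sum_erase _ _ (Finset.mem_univ μ)).symm
  have hfil : (Finset.univ.erase μ).filter (fun σ => G.prox μ σ) = G.proxF μ := by
    ext σ
    simp only [proxF, Finset.mem_filter, Finset.mem_erase, Finset.mem_univ, true_and, and_true]
    constructor
    · tauto
    · intro h
      refine ⟨?_, h⟩
      rintro rfl
      exact prox_irrefl _ h
  have e2 : ∑ σ ∈ Finset.univ.erase μ, G.P μ σ * G.Q σ ρ
      = ∑ σ ∈ G.proxF μ, -G.Q σ ρ := by
    rw [← hfil, Finset.sum_filter]
    apply Finset.sum_congr rfl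
    intro σ hσ
    have hne : μ ≠ σ := (Finset.ne_of_mem_erase hσ).symm
    rw [P_apply_ne hne]
    by_cases hp : G.prox μ σ <;> simp [hp]
  rw [split, P_diag, one_mul, e2, Finset.sum_neg_distrib] at h
  linarith [h]

private lemma finStrong {n : ℕ} (Pp : Fin n → Prop)
    (h : ∀ μ : Fin n, (∀ σ : Fin n, σ < μ → Pp σ) → Pp μ) : ∀ μ, Pp μ := by
  have key : ∀ k : ℕ, ∀ μ : Fin n, μ.val ≤ k → Pp μ := by
    intro k
    induction k with
    | zero =>
      intro μ hμ
      exact h μ (fun σ hσ => absurd (Fin.lt_def.1 hσ) (by omega))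
    | succ k IH =>
      intro μ hμ
      exact h μ (fun σ hσ => IH σ (by have := Fin.lt_def.1 hσ; omega))
  exact fun μ => key μ.val μ le_rfl

lemma Q_eq_zero_of_lt : ∀ {μ ρ : Fin G.N}, μ < ρ → G.Q μ ρ = 0 := by
  have : ∀ μ : Fin G.N, ∀ ρ, μ < ρ → G.Q μ ρ = 0 := by
    refine finStrong _ (fun μ IH ρ hρ => ?_)
    rw [Q_rec]
    rw [if_neg (ne_of_lt hρ)]
    rw [Finset.sum_eq_zero, zero_add]
    intro σ hσ
    have hlt : σ < μ := G.prox_lt (by simpa [proxF] using hσ)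
    exact IH σ hlt ρ (hlt.trans hρ)
  exact fun {μ ρ} h => this μ ρ h

lemma Q_nonneg : ∀ (μ ρ : Fin G.N), 0 ≤ G.Q μ ρ := by
  refine finStrong _ (fun μ IH ρ => ?_)
  rw [Q_rec]
  have h1 : (0:ℚ) ≤ if μ = ρ then (1:ℚ) else 0 := by positivity
  refine add_nonneg h1 (Finset.sum_nonneg fun σ hσ => ?_)
  exact IH σ (G.prox_lt (by simpa [proxF] using hσ)) ρ

lemma Q_diag (μ : Fin G.N) : G.Q μ μ = 1 := by
  rw [Q_rec, if_pos rfl, Finset.sum_eq_zero, add_zero]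
  intro σ hσ
  exact Q_eq_zero_of_lt (G.prox_lt (by simpa [proxF] using hσ))

lemma Q_root : ∀ μ : Fin G.N, 1 ≤ G.Q μ G.root := by
  refine finStrong _ (fun μ IH => ?_)
  by_cases h : μ = G.root
  · rw [h, Q_diag]
  · have hpos : 0 < (μ : ℕ) := by
      rcases Nat.eq_zero_or_pos (μ : ℕ) with h0 | h0
      · exact absurd (Fin.ext h0 : μ = G.root) h
      · exact h0
    obtain ⟨σ₀, hσ₀⟩ := G.prox_nonempty μ hpos
    have hσ₀m : σ₀ ∈ G.proxF μ := by simp [proxF, hσ₀]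
    rw [Q_rec, if_neg h, zero_add]
    calc (1:ℚ) ≤ G.Q σ₀ G.root := IH σ₀ (G.prox_lt hσ₀)
      _ ≤ ∑ σ ∈ G.proxF μ, G.Q σ G.root :=
          Finset.single_le_sum (fun σ _ => Q_nonneg σ G.root) hσ₀m

lemma MM_symm (a b : Fin G.N) : G.MM a b = G.MM b a := by
  simp only [MM, Matrix.mul_apply, Matrix.transpose_apply]
  exact Finset.sum_congr rfl fun x _ => mul_comm _ _

lemma detMM : G.MM.det = 1 := by
  simp [MM, Matrix.det_mul, Matrix.det_transpose, detP]

lemma isUnit_detMM : IsUnit G.MM.det := by rw [detMM]; exact isUnit_one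

lemma V_eq_inv : G.V = (G.MM)⁻¹ := rfl

lemma MM_V : G.MM * G.V = 1 := by
  rw [V_eq_inv]; exact Matrix.mul_nonsing_inv _ isUnit_detMM

lemma V_MM : G.V * G.MM = 1 := by
  rw [V_eq_inv]; exact Matrix.nonsing_inv_mul _ isUnit_detMM

lemma V_eq_QQt : G.V = G.Q * G.Qᵀ := by
  show (G.Pᵀ * G.P)⁻¹ = G.Q * G.Qᵀ
  rw [Matrix.mul_inv_rev, ← Matrix.transpose_nonsing_inv]
  rfl

lemma V_apply (a b : Fin G.N) : G.V a b = ∑ ρ, G.Q a ρ * G.Q b ρ := by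
  rw [V_eq_QQt]
  simp [Matrix.mul_apply, Matrix.transpose_apply]

lemma V_symm (a b : Fin G.N) : G.V a b = G.V b a := by
  rw [V_apply, V_apply]
  exact Finset.sum_congr rfl fun x _ => mul_comm _ _

lemma V_ge_one (a b : Fin G.N) : 1 ≤ G.V a b := by
  rw [V_apply]
  calc (1:ℚ) ≤ G.Q a G.root * G.Q b G.root :=
        one_le_mul_of_one_le_of_one_le (Q_root a) (Q_root b)
    _ ≤ ∑ ρ, G.Q a ρ * G.Q b ρ :=
        Finset.single_le_sum (fun ρ _ => mul_nonneg (Q_nonneg a ρ) (Q_nonneg b ρ))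
          (Finset.mem_univ _)

lemma V_pos (a b : Fin G.N) : 0 < G.V a b := lt_of_lt_of_le one_pos (V_ge_one a b)

lemma MMV_apply (a b : Fin G.N) :
    ∑ σ, G.MM a σ * G.V σ b = if a = b then 1 else 0 := by
  have h : (G.MM * G.V) a b = (1 : Matrix (Fin G.N) (Fin G.N) ℚ) a b := by rw [MM_V]
  rwa [Matrix.mul_apply, Matrix.one_apply] at h

lemma kvec_ge_one (ν : Fin G.N) : 1 ≤ G.kvec ν := by
  unfold kvec
  calc (1:ℚ) = G.Q ν ν := (Q_diag ν).symm
    _ ≤ ∑ μ, G.Q ν μ := Finset.single_le_sum (fun μ _ => Q_nonneg ν μ) (Finset.mem_univ _)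

end DualGraph
end
noncomputable section
namespace DualGraph
open Finset

variable {G : DualGraph}

private lemma quad_sum {m : Type*} [Fintype m] (A : Matrix m m ℚ) (u : m → ℚ) :
    ∑ β, (∑ ρ, u ρ * (Aᵀ * A) ρ β) * u β = ∑ x, (∑ β, A x β * u β)^2 := by
  have lhs : ∑ β, (∑ ρ, u ρ * (Aᵀ * A) ρ β) * u β
      = ∑ β, ∑ ρ, ∑ x, (A x β * u β) * (A x ρ * u ρ) := by
    refine Finset.sum_congr rfl fun β _ => ?_
    rw [Finset.sum_mul]
    refine Finset.sum_congr rfl fun ρ _ => ?_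
    rw [Matrix.mul_apply, Finset.mul_sum, Finset.sum_mul]
    refine Finset.sum_congr rfl fun x _ => ?_
    simp only [Matrix.transpose_apply]
    ring
  rw [lhs]
  have swap1 : ∑ β, ∑ ρ, ∑ x, (A x β * u β) * (A x ρ * u ρ)
      = ∑ β, ∑ x, ∑ ρ, (A x β * u β) * (A x ρ * u ρ) :=
    Finset.sum_congr rfl fun β _ => Finset.sum_comm
  rw [swap1, Finset.sum_comm]
  refine Finset.sum_congr rfl fun x _ => ?_
  rw [sq, Finset.sum_mul_sum]

private lemma quad_pos {m : Type*} [Fintype m] [DecidableEq m] (A B : Matrix m m ℚ)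
    (hBA : B * A = 1) (u : m → ℚ) (hu : u ≠ 0) :
    0 < ∑ β, (∑ ρ, u ρ * (Aᵀ * A) ρ β) * u β := by
  rw [quad_sum]
  rcases (Finset.sum_nonneg fun x (_ : x ∈ Finset.univ) => sq_nonneg (∑ β, A x β * u β)).lt_or_eq
    with hlt | heq
  · exact hlt
  · exfalso
    have hz : ∀ x ∈ Finset.univ, (∑ β, A x β * u β)^2 = 0 :=
      (Finset.sum_eq_zero_iff_of_nonneg (fun x _ => sq_nonneg _)).1 heq.symm
    have hAu : A *ᵥ u = 0 := by
      funext x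
      have h1 := hz x (Finset.mem_univ x)
      rw [sq_eq_zero_iff] at h1
      simpa [Matrix.mulVec, dotProduct] using h1
    have : u = 0 := by
      calc u = (B * A) *ᵥ u := by rw [hBA, Matrix.one_mulVec]
        _ = B *ᵥ (A *ᵥ u) := (Matrix.mulVec_mulVec u B A).symm
        _ = 0 := by rw [hAu, Matrix.mulVec_zero]
    exact hu this

lemma quad_MM_pos (u : Fin G.N → ℚ) (hu : u ≠ 0) :
    0 < ∑ β, (∑ ρ, u ρ * G.MM ρ β) * u β :=
  quad_pos G.P G.Q QP u hu

lemma quad_V_pos (u : Fin G.N → ℚ) (hu : u ≠ 0) :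
    0 < ∑ β, (∑ ρ, u ρ * G.V ρ β) * u β := by
  have hV : G.V = G.Qᵀᵀ * G.Qᵀ := by rw [Matrix.transpose_transpose, V_eq_QQt]
  have hBA : G.Pᵀ * G.Qᵀ = 1 := by rw [← Matrix.transpose_mul, QP, Matrix.transpose_one]
  have := quad_pos G.Qᵀ G.Pᵀ hBA u hu
  rwa [← hV] at this

/-- Common satellites of `μ` and `ν`. -/
def satF (G : DualGraph) (μ ν : Fin G.N) : Finset (Fin G.N) :=
  Finset.univ.filter (fun ρ => G.prox ρ μ ∧ G.prox ρ ν)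

lemma satF_card_le_one {μ ν : Fin G.N} (h : μ ≠ ν) : (G.satF μ ν).card ≤ 1 := by
  rw [Finset.card_le_one]
  intro a ha b hb
  simp only [satF, Finset.mem_filter, Finset.mem_univ, true_and] at ha hb
  by_contra hab
  rcases lt_or_gt_of_ne hab with hlt | hlt
  · exact (G.prox_pair hb.1 hb.2 h).2 a hlt ⟨ha.1, ha.2⟩
  · exact (G.prox_pair ha.1 ha.2 h).2 b hlt ⟨hb.1, hb.2⟩

lemma MM_offdiag_eq {μ ν : Fin G.N} (h : μ ≠ ν) :
    G.MM μ ν = G.P μ ν + G.P ν μ + ((G.satF μ ν).card : ℚ) := by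
  have hmm : G.MM μ ν = ∑ ρ, G.P ρ μ * G.P ρ ν := by
    simp [MM, Matrix.mul_apply, Matrix.transpose_apply]
  rw [hmm, ← Finset.add_sum_erase _ _ (Finset.mem_univ μ)]
  have hν : ν ∈ Finset.univ.erase μ := Finset.mem_erase.2 ⟨h.symm, Finset.mem_univ ν⟩
  rw [← Finset.add_sum_erase _ _ hν, P_diag, one_mul, P_diag, mul_one]
  have hterm : ∀ ρ ∈ (Finset.univ.erase μ).erase ν, G.P ρ μ * G.P ρ ν
      = if G.prox ρ μ ∧ G.prox ρ ν then (1:ℚ) else 0 := by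
    intro ρ hρ
    have h1 := Finset.mem_erase.1 hρ
    have h2 := Finset.mem_erase.1 h1.2
    rw [P_apply_ne h2.1, P_apply_ne h1.1]
    by_cases hp1 : G.prox ρ μ <;> by_cases hp2 : G.prox ρ ν <;> simp [hp1, hp2]
  rw [Finset.sum_congr rfl hterm, Finset.sum_boole]
  have hfil : ((Finset.univ.erase μ).erase ν).filter (fun ρ => G.prox ρ μ ∧ G.prox ρ ν)
      = G.satF μ ν := by
    ext ρ
    simp only [satF, Finset.mem_filter, Finset.mem_erase, Finset.mem_univ, true_and, and_true]
    constructor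
    · tauto
    · intro hp
      refine ⟨⟨?_, ?_⟩, hp⟩
      · exact fun he => absurd (G.prox_lt hp.2) (by rw [he]; exact lt_irrefl _)
      · exact fun he => absurd (G.prox_lt hp.1) (by rw [he]; exact lt_irrefl _)
  rw [hfil]
  ring

lemma P_pair_neg_one {μ ν : Fin G.N} (h : μ ≠ ν) (hrel : G.prox μ ν ∨ G.prox ν μ) :
    G.P μ ν + G.P ν μ = -1 := by
  rw [P_apply_ne h, P_apply_ne h.symm]
  rcases hrel with h1 | h1
  · have h2 : ¬ G.prox ν μ := fun h2 => lt_asymm (G.prox_lt h1) (G.prox_lt h2)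
    simp [h1, h2]
  · have h2 : ¬ G.prox μ ν := fun h2 => lt_asymm (G.prox_lt h1) (G.prox_lt h2)
    simp [h1, h2]

lemma adj_iff {μ ν : Fin G.N} : G.adj μ ν ↔ μ ≠ ν ∧ G.MM μ ν = -1 := Iff.rfl

lemma MM_offdiag {μ ν : Fin G.N} (h : μ ≠ ν) : G.MM μ ν = 0 ∨ G.MM μ ν = -1 := by
  rw [MM_offdiag_eq h]
  rcases Nat.le_one_iff_eq_zero_or_eq_one.1 (satF_card_le_one h) with hc | hc
  · rw [hc]
    by_cases hrel : G.prox μ ν ∨ G.prox ν μ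
    · right; rw [P_pair_neg_one h hrel]; norm_num
    · left
      push_neg at hrel
      rw [P_apply_ne h, P_apply_ne h.symm]
      simp [hrel.1, hrel.2]
  · left
    obtain ⟨ρ, hρ⟩ := Finset.card_eq_one.1 hc
    have hρm : ρ ∈ G.satF μ ν := hρ ▸ Finset.mem_singleton_self ρ
    simp only [satF, Finset.mem_filter, Finset.mem_univ, true_and] at hρm
    rw [P_pair_neg_one h (G.prox_pair hρm.1 hρm.2 h).1, hc]
    norm_num

lemma MM_eq_zero_of_not_adj {μ ν : Fin G.N} (h : μ ≠ ν) (hn : ¬ G.adj μ ν) :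
    G.MM μ ν = 0 := by
  rcases MM_offdiag h with h0 | h1
  · exact h0
  · exact absurd (adj_iff.2 ⟨h, h1⟩) hn

lemma MM_diag_pos (ν : Fin G.N) : 0 < G.MM ν ν := by
  have hd : G.MM ν ν = ∑ ρ, G.P ρ ν * G.P ρ ν := by
    simp [MM, Matrix.mul_apply, Matrix.transpose_apply]
  rw [hd]
  calc (0:ℚ) < G.P ν ν * G.P ν ν := by rw [P_diag]; norm_num
    _ ≤ ∑ ρ, G.P ρ ν * G.P ρ ν :=
        Finset.single_le_sum (f := fun ρ => G.P ρ ν * G.P ρ ν) (fun ρ _ => mul_self_nonneg _) (Finset.mem_univ ν)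

lemma graph_adj {μ ν : Fin G.N} : G.graph.Adj μ ν ↔ G.adj μ ν := Iff.rfl

lemma prox_step {μ a : Fin G.N} (h : G.prox μ a) :
    G.adj μ a ∨ ∃ ρ, G.prox ρ μ ∧ G.prox ρ a := by
  have hne : μ ≠ a := fun he => absurd (G.prox_lt h) (by rw [he]; exact lt_irrefl _)
  rcases Finset.eq_empty_or_nonempty (G.satF μ a) with hs | hs
  · left
    refine adj_iff.2 ⟨hne, ?_⟩
    rw [MM_offdiag_eq hne, P_pair_neg_one hne (Or.inl h), hs]
    norm_num
  · right
    obtain ⟨ρ, hρ⟩ := hs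
    simp only [satF, Finset.mem_filter, Finset.mem_univ, true_and] at hρ
    exact ⟨ρ, hρ⟩

lemma reachable_of_prox :
    ∀ (k : ℕ) (μ a : Fin G.N), G.N - μ.val ≤ k → G.prox μ a → G.graph.Reachable μ a := by
  intro k
  induction k with
  | zero => intro μ a hk _; have := μ.isLt; omega
  | succ k IH =>
    intro μ a hk h
    rcases prox_step h with hadj | ⟨ρ, h1, h2⟩
    · exact SimpleGraph.Adj.reachable (graph_adj.2 hadj)
    · have hμρ : (μ:ℕ) < (ρ:ℕ) := Fin.lt_def.1 (G.prox_lt h1)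
      have hk' : G.N - ρ.val ≤ k := by omega
      exact ((IH ρ μ hk' h1).symm).trans (IH ρ a hk' h2)

lemma reachable_root : ∀ ν : Fin G.N, G.graph.Reachable ν G.root := by
  refine finStrong _ (fun ν IH => ?_)
  by_cases h : ν = G.root
  · rw [h]
  · have hpos : 0 < (ν : ℕ) := by
      rcases Nat.eq_zero_or_pos (ν : ℕ) with h0 | h0
      · exact absurd (Fin.ext h0 : ν = G.root) h
      · exact h0
    obtain ⟨a, ha⟩ := G.prox_nonempty ν hpos
    exact (reachable_of_prox G.N ν a (by omega) ha).trans (IH a (G.prox_lt ha))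

lemma conn : G.graph.Connected := by
  rw [SimpleGraph.connected_iff]
  exact ⟨fun u v => (reachable_root u).trans (reachable_root v).symm, ⟨G.root⟩⟩

end DualGraph
end
noncomputable section
namespace DualGraph
open Finset

variable {G : DualGraph}

lemma proxF_card_le_two (μ : Fin G.N) : (G.proxF μ).card ≤ 2 := by
  have h := G.prox_card μ
  have he : {ν | G.prox μ ν}.ncard = (G.proxF μ).card := by
    rw [Set.ncard_eq_toFinset_card']
    congr 1
    ext σ
    simp [proxF]
  omega

lemma proxF_root : (G.proxF G.root).card = 0 := by
  rw [Finset.card_eq_zero, Finset.eq_empty_iff_forall_notMem]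
  intro σ hσ
  have h : G.prox G.root σ := by simpa [proxF] using hσ
  have := Fin.lt_def.1 (G.prox_lt h)
  simp [root] at this

lemma proxF_card_pos {μ : Fin G.N} (h : μ ≠ G.root) : 1 ≤ (G.proxF μ).card := by
  have hpos : 0 < (μ : ℕ) := by
    rcases Nat.eq_zero_or_pos (μ : ℕ) with h0 | h0
    · exact absurd (Fin.ext h0 : μ = G.root) h
    · exact h0
  obtain ⟨σ, hσ⟩ := G.prox_nonempty μ hpos
  exact Finset.card_pos.2 ⟨σ, by simp [proxF, hσ]⟩

private lemma filter_erase_prox (ρ : Fin G.N) :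
    (Finset.univ.erase ρ).filter (fun μ => G.prox ρ μ) = G.proxF ρ := by
  ext σ
  simp only [proxF, Finset.mem_filter, Finset.mem_erase, Finset.mem_univ, true_and, and_true]
  constructor
  · tauto
  · intro h
    refine ⟨?_, h⟩
    rintro rfl
    exact prox_irrefl _ h

private lemma sum_ite_negone (s : Finset (Fin G.N)) (p : Fin G.N → Prop) :
    ∑ μ ∈ s, (if p μ then (-1:ℚ) else 0) = -(((s.filter p).card : ℕ) : ℚ) := by
  have h : ∀ μ ∈ s, (if p μ then (-1:ℚ) else 0) = -(if p μ then (1:ℚ) else 0) := by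
    intro μ _
    split <;> norm_num
  rw [Finset.sum_congr rfl h, Finset.sum_neg_distrib, Finset.sum_boole]

private lemma sum_ite_one (s : Finset (Fin G.N)) (p : Fin G.N → Prop) :
    ∑ μ ∈ s, (if p μ then (1:ℚ) else 0) = (((s.filter p).card : ℕ) : ℚ) :=
  Finset.sum_boole _ _

lemma sum_P_row (ρ : Fin G.N) : ∑ μ, G.P ρ μ = 1 - (((G.proxF ρ).card : ℕ) : ℚ) := by
  rw [← Finset.add_sum_erase _ _ (Finset.mem_univ ρ), P_diag]
  have h : ∀ μ ∈ Finset.univ.erase ρ, G.P ρ μ = (if G.prox ρ μ then (-1:ℚ) else 0) := by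
    intro μ hμ
    exact P_apply_ne ((Finset.mem_erase.1 hμ).1).symm
  rw [Finset.sum_congr rfl h, sum_ite_negone, filter_erase_prox]
  ring

lemma sum_P_row_sq (ρ : Fin G.N) :
    ∑ μ, G.P ρ μ * G.P ρ μ = 1 + (((G.proxF ρ).card : ℕ) : ℚ) := by
  rw [← Finset.add_sum_erase _ _ (Finset.mem_univ ρ), P_diag, one_mul]
  have h : ∀ μ ∈ Finset.univ.erase ρ, G.P ρ μ * G.P ρ μ
      = (if G.prox ρ μ then (1:ℚ) else 0) := by
    intro μ hμ
    rw [P_apply_ne ((Finset.mem_erase.1 hμ).1).symm]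
    split <;> norm_num
  rw [Finset.sum_congr rfl h, sum_ite_one, filter_erase_prox]

lemma MM_apply (μ ν : Fin G.N) : G.MM μ ν = ∑ ρ, G.P ρ μ * G.P ρ ν := by
  simp [MM, Matrix.mul_apply, Matrix.transpose_apply]

lemma total_sum :
    ∑ μ, ∑ ν, G.MM μ ν = ∑ ρ, (1 - (((G.proxF ρ).card : ℕ) : ℚ))^2 := by
  have h1 : ∑ μ, ∑ ν, G.MM μ ν = ∑ μ, ∑ ρ, ∑ ν, G.P ρ μ * G.P ρ ν := by
    refine Finset.sum_congr rfl fun μ _ => ?_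
    rw [show (∑ ν, G.MM μ ν) = ∑ ν, ∑ ρ, G.P ρ μ * G.P ρ ν from
      Finset.sum_congr rfl fun ν _ => MM_apply μ ν]
    exact Finset.sum_comm
  rw [h1, Finset.sum_comm]
  refine Finset.sum_congr rfl fun ρ _ => ?_
  have h2 : ∑ μ, ∑ ν, G.P ρ μ * G.P ρ ν = (∑ μ, G.P ρ μ) * (∑ ν, G.P ρ ν) := by
    rw [Finset.sum_mul_sum]
  rw [h2, sum_P_row, sq]

lemma diag_sum :
    ∑ ν, G.MM ν ν = ∑ ρ, (1 + (((G.proxF ρ).card : ℕ) : ℚ)) := by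
  have h1 : ∑ ν, G.MM ν ν = ∑ ν, ∑ ρ, G.P ρ ν * G.P ρ ν :=
    Finset.sum_congr rfl fun ν _ => MM_apply ν ν
  rw [h1, Finset.sum_comm]
  exact Finset.sum_congr rfl fun ρ _ => sum_P_row_sq ρ

lemma row_offdiag (μ : Fin G.N) :
    ∑ ν ∈ Finset.univ.erase μ, G.MM μ ν = -((G.graph.degree μ : ℕ) : ℚ) := by
  have h : ∀ ν ∈ Finset.univ.erase μ, G.MM μ ν = (if G.graph.Adj μ ν then (-1:ℚ) else 0) := by
    intro ν hν
    have hne : μ ≠ ν := ((Finset.mem_erase.1 hν).1).symm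
    by_cases ha : G.graph.Adj μ ν
    · rw [if_pos ha]
      exact (adj_iff.1 (graph_adj.1 ha)).2
    · rw [if_neg ha]
      exact MM_eq_zero_of_not_adj hne (fun h' => ha (graph_adj.2 h'))
  rw [Finset.sum_congr rfl h, sum_ite_negone]
  congr 2
  have hfe : (Finset.univ.erase μ).filter (fun ν => G.graph.Adj μ ν)
      = Finset.univ.filter (fun ν => G.graph.Adj μ ν) := by
    ext ν
    simp only [Finset.mem_filter, Finset.mem_erase, Finset.mem_univ, true_and, and_true]
    exact ⟨fun h' => h'.2, fun h' => ⟨h'.ne', h'⟩⟩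
  rw [hfe, ← SimpleGraph.neighborFinset_eq_filter]
  rfl

lemma sum_degree_q : ∑ μ, ((G.graph.degree μ : ℕ) : ℚ) = 2 * ((G.N : ℚ) - 1) := by
  have split : ∀ μ : Fin G.N, ∑ ν, G.MM μ ν
      = G.MM μ μ + ∑ ν ∈ Finset.univ.erase μ, G.MM μ ν :=
    fun μ => (Finset.add_sum_erase _ _ (Finset.mem_univ μ)).symm
  have h1 : ∑ μ, ∑ ν, G.MM μ ν
      = ∑ μ, G.MM μ μ + ∑ μ, ∑ ν ∈ Finset.univ.erase μ, G.MM μ ν := by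
    rw [← Finset.sum_add_distrib]
    exact Finset.sum_congr rfl fun μ _ => split μ
  have h2 : ∑ μ, ∑ ν ∈ Finset.univ.erase μ, G.MM μ ν
      = -∑ μ, ((G.graph.degree μ : ℕ) : ℚ) := by
    rw [← Finset.sum_neg_distrib]
    exact Finset.sum_congr rfl fun μ _ => by rw [row_offdiag]
  have h3 := total_sum (G := G)
  have h4 := diag_sum (G := G)
  have key : ∀ ρ : Fin G.N, (1 + (((G.proxF ρ).card : ℕ) : ℚ))
      - (1 - (((G.proxF ρ).card : ℕ) : ℚ))^2 = if ρ = G.root then 0 else 2 := by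
    intro ρ
    by_cases h : ρ = G.root
    · rw [if_pos h, h, proxF_root]
      norm_num
    · rw [if_neg h]
      have hp1 := proxF_card_pos h
      have hp2 := proxF_card_le_two ρ
      have hc : (G.proxF ρ).card = 1 ∨ (G.proxF ρ).card = 2 := by omega
      rcases hc with hc | hc <;> rw [hc] <;> norm_num
  have h5 : ∑ ρ, ((1 + (((G.proxF ρ).card : ℕ) : ℚ))
      - (1 - (((G.proxF ρ).card : ℕ) : ℚ))^2) = 2 * ((G.N : ℚ) - 1) := by
    rw [Finset.sum_congr rfl fun ρ _ => key ρ]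
    rw [← Finset.add_sum_erase _ _ (Finset.mem_univ G.root), if_pos rfl, zero_add]
    have hall : ∀ ρ ∈ Finset.univ.erase G.root, (if ρ = G.root then (0:ℚ) else 2) = 2 := by
      intro ρ hρ
      rw [if_neg (Finset.mem_erase.1 hρ).1]
    rw [Finset.sum_congr rfl hall, Finset.sum_const]
    rw [Finset.card_erase_of_mem (Finset.mem_univ _), Finset.card_univ, Fintype.card_fin]
    rw [nsmul_eq_mul]
    have hN : 1 ≤ G.N := G.Npos
    push_cast [Nat.cast_sub hN]
    ring
  have hsum : ∑ ρ, (1 + (((G.proxF ρ).card : ℕ) : ℚ))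
      - ∑ ρ, (1 - (((G.proxF ρ).card : ℕ) : ℚ))^2 = 2 * ((G.N : ℚ) - 1) := by
    rw [← Finset.sum_sub_distrib]
    exact h5
  have := h1
  rw [h3, h4, h2] at this
  linarith

lemma edgecount : G.graph.edgeFinset.card = G.N - 1 := by
  have hh := SimpleGraph.sum_degrees_eq_twice_card_edges G.graph
  have hq : ((2 * G.graph.edgeFinset.card : ℕ) : ℚ) = 2 * ((G.N : ℚ) - 1) := by
    rw [← hh]
    push_cast
    exact sum_degree_q
  have hN : 1 ≤ G.N := G.Npos
  have h2 : ((G.graph.edgeFinset.card : ℕ) : ℚ) = ((G.N - 1 : ℕ) : ℚ) := by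
    push_cast [Nat.cast_sub hN]
    push_cast at hq
    linarith
  exact_mod_cast h2

end DualGraph
end
noncomputable section
namespace DualGraph
open Finset

variable {G : DualGraph}

lemma exists_parent {r v : Fin G.N} (hv : v ≠ r) :
    ∃ u, G.graph.Adj v u ∧ G.graph.dist u r + 1 = G.graph.dist v r := by
  have hc : G.graph.Connected := conn
  have hdpos : 0 < G.graph.dist v r := hc.pos_dist_of_ne hv
  obtain ⟨w, hw⟩ := hc.exists_walk_length_eq_dist v r
  cases w with
  | nil => rw [← hw] at hdpos; simp at hdpos
  | @cons _ u _ hadj w' =>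
    refine ⟨u, hadj, ?_⟩
    have h1 : G.graph.dist u r ≤ w'.length := SimpleGraph.dist_le w'
    have h2 : G.graph.dist v r ≤ G.graph.dist v u + G.graph.dist u r := hc.dist_triangle
    have h3 : G.graph.dist v u ≤ 1 := by
      have := SimpleGraph.dist_le (SimpleGraph.Walk.cons hadj SimpleGraph.Walk.nil)
      simpa using this
    have h4 : w'.length + 1 = G.graph.dist v r := by
      rw [← hw]; simp [SimpleGraph.Walk.length_cons]
    omega

/-- The parent of `v` in the direction of the root `r`. -/
def parent (G : DualGraph) (r v : Fin G.N) : Fin G.N :=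
  if h : v = r then v else Classical.choose (exists_parent h)

lemma parent_spec {r v : Fin G.N} (hv : v ≠ r) :
    G.graph.Adj v (G.parent r v) ∧
      G.graph.dist (G.parent r v) r + 1 = G.graph.dist v r := by
  unfold parent
  rw [dif_neg hv]
  exact Classical.choose_spec (exists_parent hv)

/-- The parent edge. -/
def pedge (G : DualGraph) (r v : Fin G.N) : Sym2 (Fin G.N) := s(v, G.parent r v)

lemma pedge_image (r : Fin G.N) :
    (Finset.univ.erase r).image (G.pedge r) = G.graph.edgeFinset := by
  have hsub : (Finset.univ.erase r).image (G.pedge r) ⊆ G.graph.edgeFinset := by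
    intro e he
    obtain ⟨v, hv, rfl⟩ := Finset.mem_image.1 he
    have hvr : v ≠ r := (Finset.mem_erase.1 hv).1
    exact SimpleGraph.mem_edgeFinset.2 ((SimpleGraph.mem_edgeSet _).2 (parent_spec hvr).1)
  have hinj : Set.InjOn (G.pedge r) (Finset.univ.erase r : Finset (Fin G.N)) := by
    intro v hv w hw he
    have hvr : v ≠ r := (Finset.mem_erase.1 (by exact_mod_cast hv)).1
    have hwr : w ≠ r := (Finset.mem_erase.1 (by exact_mod_cast hw)).1
    have hv2 := (parent_spec (G := G) hvr).2
    have hw2 := (parent_spec (G := G) hwr).2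
    rcases Sym2.eq_iff.1 he with ⟨h1, h2⟩ | ⟨h1, h2⟩
    · exact h1
    · rw [← h1] at hw2
      rw [h2] at hv2
      omega
  have hcard : ((Finset.univ.erase r).image (G.pedge r)).card = G.N - 1 := by
    rw [Finset.card_image_of_injOn hinj, Finset.card_erase_of_mem (Finset.mem_univ _),
      Finset.card_univ, Fintype.card_fin]
  exact Finset.eq_of_subset_of_card_le hsub (by rw [hcard, edgecount])

lemma up1 {r a b : Fin G.N} (hab : G.graph.Adj a b) :
    G.graph.dist a r ≠ G.graph.dist b r := by
  have he : s(a, b) ∈ G.graph.edgeFinset :=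
    SimpleGraph.mem_edgeFinset.2 ((SimpleGraph.mem_edgeSet _).2 hab)
  rw [← pedge_image r] at he
  obtain ⟨v, hv, hvp⟩ := Finset.mem_image.1 he
  have hvr : v ≠ r := (Finset.mem_erase.1 hv).1
  have hv2 := (parent_spec (G := G) hvr).2
  rcases Sym2.eq_iff.1 hvp with ⟨h1, h2⟩ | ⟨h1, h2⟩
  · rw [h2] at hv2
    rw [h1] at hv2
    omega
  · rw [h2] at hv2
    rw [h1] at hv2
    omega

lemma up2 {r v u u' : Fin G.N} (hv : v ≠ r) (h1 : G.graph.Adj v u) (h2 : G.graph.Adj v u')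
    (hd1 : G.graph.dist u r + 1 = G.graph.dist v r)
    (hd2 : G.graph.dist u' r + 1 = G.graph.dist v r) : u = u' := by
  have key : ∀ z : Fin G.N, G.graph.Adj v z →
      G.graph.dist z r + 1 = G.graph.dist v r → z = G.parent r v := by
    intro z hadj hd
    have he : s(v, z) ∈ G.graph.edgeFinset :=
      SimpleGraph.mem_edgeFinset.2 ((SimpleGraph.mem_edgeSet _).2 hadj)
    rw [← pedge_image r] at he
    obtain ⟨w, hw, hwp⟩ := Finset.mem_image.1 he
    have hwr : w ≠ r := (Finset.mem_erase.1 hw).1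
    have hw2 := (parent_spec (G := G) hwr).2
    rcases Sym2.eq_iff.1 hwp with ⟨ha, hb⟩ | ⟨ha, hb⟩
    · rw [ha] at hb
      exact hb.symm
    · rw [ha] at hb hw2
      rw [hb] at hw2
      omega
  rw [key u h1 hd1, key u' h2 hd2]

/-- `i` separates `x` from `y`: every walk from `x` to `y` passes through `i`. -/
def Sep (G : DualGraph) (i x y : Fin G.N) : Prop :=
  ∀ w : G.graph.Walk x y, i ∈ w.support

lemma sep_self_left (i y : Fin G.N) : G.Sep i i y :=
  fun w => w.start_mem_support

lemma sep_self_right (i x : Fin G.N) : G.Sep i x i :=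
  fun w => w.end_mem_support

lemma sep_symm {i x y : Fin G.N} (h : G.Sep i x y) : G.Sep i y x := by
  intro w
  have := h w.reverse
  rwa [SimpleGraph.Walk.support_reverse, List.mem_reverse] at this

lemma not_sep_sound {i x y : Fin G.N} (h : ¬ G.Sep i x y) :
    ∃ w : G.graph.Walk x y, i ∉ w.support := by
  rw [Sep, not_forall] at h
  exact h

lemma not_sep_trans {i x y z : Fin G.N} (h1 : ¬ G.Sep i x y) (h2 : ¬ G.Sep i y z) :
    ¬ G.Sep i x z := by
  obtain ⟨w1, hw1⟩ := not_sep_sound h1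
  obtain ⟨w2, hw2⟩ := not_sep_sound h2
  intro hS
  have := hS (w1.append w2)
  rw [SimpleGraph.Walk.support_append, List.mem_append] at this
  rcases this with h | h
  · exact hw1 h
  · exact hw2 ((List.tail_sublist _).subset h)

lemma ne_of_not_sep_left {i x y : Fin G.N} (h : ¬ G.Sep i x y) : i ≠ x :=
  fun he => h (he ▸ sep_self_left i y)

lemma ne_of_not_sep_right {i x y : Fin G.N} (h : ¬ G.Sep i x y) : i ≠ y :=
  fun he => h (he ▸ sep_self_right i x)

lemma disteq_of_sep {x y μ : Fin G.N} (h : G.Sep μ x y) :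
    G.graph.dist x μ + G.graph.dist μ y = G.graph.dist x y := by
  have hc : G.graph.Connected := conn
  obtain ⟨w, hw⟩ := hc.exists_walk_length_eq_dist x y
  have hμ : μ ∈ w.support := h w
  have t1 : G.graph.dist x μ ≤ (w.takeUntil μ hμ).length := SimpleGraph.dist_le _
  have t2 : G.graph.dist μ y ≤ (w.dropUntil μ hμ).length := SimpleGraph.dist_le _
  have t3 : (w.takeUntil μ hμ).length + (w.dropUntil μ hμ).length = w.length := by
    have := congrArg SimpleGraph.Walk.length (w.take_spec hμ)
    rwa [SimpleGraph.Walk.length_append] at this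
  have t4 : G.graph.dist x y ≤ G.graph.dist x μ + G.graph.dist μ y := hc.dist_triangle
  omega

lemma sep_of_disteq : ∀ {x y : Fin G.N} (w : G.graph.Walk x y) (μ : Fin G.N),
    G.graph.dist x μ + G.graph.dist μ y = G.graph.dist x y → μ ∈ w.support := by
  intro x y w
  induction w with
  | nil =>
    intro μ h
    rename_i x'
    have hc : G.graph.Connected := conn
    rw [SimpleGraph.dist_self] at h
    have h1 : G.graph.dist x' μ = 0 := by omega
    have : x' = μ := (hc.dist_eq_zero_iff).1 h1
    rw [this]
    simp
  | @cons x v₁ y hadj w' IH =>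
    intro μ h
    have hc : G.graph.Connected := conn
    by_cases hμx : μ = x
    · rw [hμx]
      simp
    · -- μ ≠ x
      have hxμpos : 0 < G.graph.dist x μ := hc.pos_dist_of_ne (Ne.symm hμx)
      have hxy_pos : 0 < G.graph.dist x y := by omega
      have hxy : x ≠ y := by
        intro he
        rw [he, SimpleGraph.dist_self] at hxy_pos
        omega
      -- construct a good first step u
      obtain ⟨w₁, hw₁⟩ := hc.exists_walk_length_eq_dist x μ
      obtain ⟨w₂, hw₂⟩ := hc.exists_walk_length_eq_dist μ y
      cases w₁ with
      | nil => rw [← hw₁] at hxμpos; simp at hxμpos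
      | @cons _ u _ hxu w₁' =>
        have hu1 : G.graph.dist u μ ≤ w₁'.length := SimpleGraph.dist_le w₁'
        have hu2 : w₁'.length + 1 = G.graph.dist x μ := by
          rw [← hw₁]; simp [SimpleGraph.Walk.length_cons]
        have hxu1 : G.graph.dist x u ≤ 1 := by
          have := SimpleGraph.dist_le (SimpleGraph.Walk.cons hxu SimpleGraph.Walk.nil)
          simpa using this
        have htriv : G.graph.dist x μ ≤ G.graph.dist x u + G.graph.dist u μ := hc.dist_triangle
        have huμ : G.graph.dist u μ + 1 = G.graph.dist x μ := by omega
        -- walk u → y through μ : w₁' ++ w₂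
        have huy1 : G.graph.dist u y ≤ w₁'.length + w₂.length := by
          have := SimpleGraph.dist_le (w₁'.append w₂)
          rwa [SimpleGraph.Walk.length_append] at this
        have hxy1 : G.graph.dist x y ≤ G.graph.dist x u + G.graph.dist u y := hc.dist_triangle
        have huy2 : G.graph.dist u y + 1 = G.graph.dist x y := by omega
        have hueq : G.graph.dist u μ + G.graph.dist μ y = G.graph.dist u y := by omega
        -- compare v₁ with u
        by_cases hv : v₁ = u
        · rw [SimpleGraph.Walk.support_cons]
          right
          exact IH μ (by rw [hv]; exact hueq)
        · -- v₁ ≠ u : dist v₁ y = dist x y + 1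
          have hne := up1 (r := y) hadj
          have hv₁x : G.graph.dist v₁ x ≤ 1 := by
            have := SimpleGraph.dist_le (SimpleGraph.Walk.cons hadj.symm SimpleGraph.Walk.nil)
            simpa using this
          have ht1 : G.graph.dist v₁ y ≤ G.graph.dist v₁ x + G.graph.dist x y := hc.dist_triangle
          have ht2 : G.graph.dist x y ≤ G.graph.dist x v₁ + G.graph.dist v₁ y := hc.dist_triangle
          have hxv₁ : G.graph.dist x v₁ ≤ 1 := by
            have := SimpleGraph.dist_le (SimpleGraph.Walk.cons hadj SimpleGraph.Walk.nil)
            simpa using this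
          have hcase : G.graph.dist v₁ y = G.graph.dist x y + 1 := by
            rcases Nat.lt_or_ge (G.graph.dist v₁ y) (G.graph.dist x y) with hlt | hge
            · exfalso
              have hd1 : G.graph.dist v₁ y + 1 = G.graph.dist x y := by omega
              have := up2 (r := y) hxy hadj hxu hd1 (by omega)
              exact hv this
            · omega
          have hv₁μ : G.graph.dist v₁ μ ≤ 1 + G.graph.dist x μ := by
            have := hc.dist_triangle (u := v₁) (v := x) (w := μ)
            omega
          have ht3 : G.graph.dist v₁ y ≤ G.graph.dist v₁ μ + G.graph.dist μ y :=
            hc.dist_triangle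
          have hveq : G.graph.dist v₁ μ + G.graph.dist μ y = G.graph.dist v₁ y := by omega
          rw [SimpleGraph.Walk.support_cons]
          right
          exact IH μ hveq

end DualGraph
end
noncomputable section
namespace DualGraph
open Finset

variable {G : DualGraph}

/-- The "grounded" matrix `W^{(i)}_{xy} = V_{xy} - V_{xi}V_{iy}/V_{ii}`. -/
def Wf (G : DualGraph) (i x y : Fin G.N) : ℚ :=
  G.V x y - G.V x i * G.V i y / G.V i i

lemma Wf_symm (i x y : Fin G.N) : G.Wf i x y = G.Wf i y x := by
  unfold Wf
  rw [V_symm x y, V_symm x i, V_symm i y]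
  ring

lemma Wf_left (i y : Fin G.N) : G.Wf i i y = 0 := by
  unfold Wf
  rw [mul_comm, mul_div_assoc, div_self (ne_of_gt (V_pos i i)), mul_one, sub_self]

lemma Wf_right (i x : Fin G.N) : G.Wf i x i = 0 := by
  rw [Wf_symm]; exact Wf_left i x

lemma MW_row {i ρ ν : Fin G.N} (hρ : ρ ≠ i) :
    ∑ σ, G.MM ρ σ * G.Wf i σ ν = if ρ = ν then 1 else 0 := by
  have h1 : ∀ σ ∈ Finset.univ, G.MM ρ σ * G.Wf i σ ν
      = G.MM ρ σ * G.V σ ν - (G.MM ρ σ * G.V σ i) * (G.V i ν / G.V i i) := by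
    intro σ _
    unfold Wf
    ring
  rw [Finset.sum_congr rfl h1, Finset.sum_sub_distrib, ← Finset.sum_mul, MMV_apply,
    MMV_apply, if_neg hρ]
  simp

lemma nbrs_mem {μ σ : Fin G.N} : σ ∈ G.nbrs μ ↔ G.adj μ σ := by
  simp [nbrs]

lemma nbrs_filter (ρ : Fin G.N) :
    (Finset.univ.erase ρ).filter (fun σ => G.adj ρ σ) = G.nbrs ρ := by
  ext σ
  simp only [nbrs, Finset.mem_filter, Finset.mem_erase, Finset.mem_univ, true_and, and_true]
  exact ⟨fun h' => h'.2, fun h' => ⟨Ne.symm h'.1, h'⟩⟩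

lemma MM_row_expand (h : Fin G.N → ℚ) (ρ : Fin G.N) :
    ∑ σ, G.MM ρ σ * h σ = G.MM ρ ρ * h ρ - ∑ σ ∈ G.nbrs ρ, h σ := by
  rw [← Finset.add_sum_erase _ _ (Finset.mem_univ ρ)]
  have e2 : ∑ σ ∈ Finset.univ.erase ρ, G.MM ρ σ * h σ = ∑ σ ∈ G.nbrs ρ, -h σ := by
    rw [← nbrs_filter ρ, Finset.sum_filter]
    apply Finset.sum_congr rfl
    intro σ hσ
    have hne : ρ ≠ σ := ((Finset.mem_erase.1 hσ).1).symm
    by_cases ha : G.adj ρ σ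
    · rw [if_pos ha, (adj_iff.1 ha).2]; ring
    · rw [if_neg ha, MM_eq_zero_of_not_adj hne ha, zero_mul]
  rw [e2, Finset.sum_neg_distrib]
  ring

lemma W_balance {i ρ ν : Fin G.N} (hρ : ρ ≠ i) :
    G.MM ρ ρ * G.Wf i ρ ν = (if ρ = ν then 1 else 0) + ∑ σ ∈ G.nbrs ρ, G.Wf i σ ν := by
  have h := MW_row (i := i) (ν := ν) hρ
  rw [MM_row_expand (fun σ => G.Wf i σ ν) ρ] at h
  linarith [h]

lemma V_balance {i ρ : Fin G.N} (hρ : ρ ≠ i) :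
    G.MM ρ ρ * G.V ρ i = ∑ σ ∈ G.nbrs ρ, G.V σ i := by
  have h := MMV_apply ρ i
  rw [MM_row_expand (fun σ => G.V σ i) ρ, if_neg hρ] at h
  linarith [h]

lemma not_sep_nil {i ν : Fin G.N} (h : ν ≠ i) : ¬ G.Sep i ν ν := by
  intro hs
  have := hs SimpleGraph.Walk.nil
  simp [SimpleGraph.Walk.support_nil] at this
  exact h this.symm

/-- Main vanishing lemma: if `i` separates `x` from `ν` then `W^{(i)}_{xν} = 0`. -/
lemma Wf_eq_zero {i x ν : Fin G.N} (h : G.Sep i x ν) : G.Wf i x ν = 0 := by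
  by_cases hxi : x = i
  · rw [hxi]; exact Wf_left i ν
  by_cases hνi : ν = i
  · rw [hνi]; exact Wf_right i x
  set u : Fin G.N → ℚ := fun ρ => if ¬ G.Sep i ν ρ then G.Wf i x ρ else 0 with hu
  have hxS : G.Sep i ν x := sep_symm h
  have hiS : G.Sep i ν i := sep_self_right i ν
  have hνS : ¬ G.Sep i ν ν := not_sep_nil hνi
  have key : ∀ β, ¬ G.Sep i ν β → ∑ ρ, u ρ * G.MM ρ β = 0 := by
    intro β hβ
    have hβi : β ≠ i := fun he => hβ (he ▸ hiS)
    have hβx : β ≠ x := fun he => hβ (he ▸ hxS)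
    have h1 : ∑ ρ, u ρ * G.MM ρ β
        = ∑ ρ, G.Wf i x ρ * G.MM ρ β
          - ∑ ρ, (if G.Sep i ν ρ then G.Wf i x ρ * G.MM ρ β else 0) := by
      rw [← Finset.sum_sub_distrib]
      refine Finset.sum_congr rfl fun ρ _ => ?_
      rw [hu]
      by_cases hρ : G.Sep i ν ρ <;> simp [hρ]
    have h2 : ∑ ρ, G.Wf i x ρ * G.MM ρ β = 0 := by
      have hmw := MW_row (i := i) (ρ := β) (ν := x) hβi
      rw [if_neg hβx] at hmw
      rw [← hmw]
      refine Finset.sum_congr rfl fun ρ _ => ?_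
      rw [Wf_symm i x ρ, MM_symm ρ β]
      ring
    have h3 : ∀ ρ ∈ Finset.univ, (if G.Sep i ν ρ then G.Wf i x ρ * G.MM ρ β else 0) = 0 := by
      intro ρ _
      by_cases hρ : G.Sep i ν ρ
      · rw [if_pos hρ]
        by_cases hρi : ρ = i
        · rw [hρi, Wf_right, zero_mul]
        · by_cases hρβ : ρ = β
          · exact absurd (hρβ ▸ hρ) hβ
          · have hnadj : ¬ G.adj ρ β := by
              intro hadj
              have hβρ : ¬ G.Sep i β ρ := by
                intro hs
                have := hs (SimpleGraph.Walk.cons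
                  (graph_adj.2 (G.adj_symm hadj)) SimpleGraph.Walk.nil)
                simp [SimpleGraph.Walk.support_cons, SimpleGraph.Walk.support_nil] at this
                rcases this with h' | h'
                · exact hβi h'.symm
                · exact hρi h'.symm
              exact (not_sep_trans hβ hβρ) hρ
            rw [MM_eq_zero_of_not_adj hρβ hnadj, mul_zero]
      · rw [if_neg hρ]
    rw [h1, h2, Finset.sum_eq_zero h3, sub_zero]
  have hquad : ∑ β, (∑ ρ, u ρ * G.MM ρ β) * u β = 0 := by
    refine Finset.sum_eq_zero fun β _ => ?_
    by_cases hβ : G.Sep i ν β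
    · have hz : u β = 0 := by rw [hu]; simp [hβ]
      rw [hz, mul_zero]
    · rw [key β hβ, zero_mul]
  by_contra hW
  have hune : u ≠ 0 := by
    intro h0
    have h1 : u ν = 0 := by rw [h0]; rfl
    have h2 : u ν = G.Wf i x ν := by rw [hu]; simp [hνS]
    rw [h2] at h1
    exact hW h1
  exact absurd hquad (ne_of_gt (quad_MM_pos u hune))

/-- Nonnegativity of `W^{(i)}`. -/
lemma Wf_nonneg (i x ν : Fin G.N) : 0 ≤ G.Wf i x ν := by
  by_cases hsep : G.Sep i x ν
  · rw [Wf_eq_zero hsep]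
  have hxi : i ≠ x := ne_of_not_sep_left hsep
  have hνi : i ≠ ν := ne_of_not_sep_right hsep
  set SF : Finset (Fin G.N) := Finset.univ.filter (fun ρ => ¬ G.Sep i ν ρ) with hSF
  have hmemSF : ∀ σ, σ ∈ SF ↔ ¬ G.Sep i ν σ := by
    intro σ
    rw [hSF]
    simp
  have hνSF : ν ∈ SF := (hmemSF ν).2 (not_sep_nil (Ne.symm hνi))
  have hxSF : x ∈ SF := (hmemSF x).2 (fun hs => hsep (sep_symm hs))
  obtain ⟨j, hjSF, hjmin⟩ :=
    SF.exists_min_image (fun ρ => G.Wf i ρ ν / G.V ρ i) ⟨ν, hνSF⟩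
  set m := G.Wf i j ν / G.V j i with hm
  suffices hm0 : 0 ≤ m by
    have hx := hjmin x hxSF
    have hV := V_pos x i
    have h0 : 0 ≤ G.Wf i x ν / G.V x i := le_trans hm0 hx
    calc (0:ℚ) ≤ (G.Wf i x ν / G.V x i) * G.V x i := mul_nonneg h0 hV.le
      _ = G.Wf i x ν := div_mul_cancel₀ _ (ne_of_gt hV)
  by_contra hneg
  push_neg at hneg
  have balance : ∀ ρ, ρ ∈ SF → G.Wf i ρ ν / G.V ρ i = m →
      ρ ≠ ν ∧ ∀ σ, G.adj ρ σ → σ ∈ SF ∧ G.Wf i σ ν / G.V σ i = m := by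
    intro ρ hρSF hρm
    have hρns : ¬ G.Sep i ν ρ := (hmemSF ρ).1 hρSF
    have hρi : ρ ≠ i := Ne.symm (ne_of_not_sep_right hρns)
    have hb1 := W_balance (i := i) (ν := ν) hρi
    have hb2 := V_balance (i := i) hρi
    have hWρ : G.Wf i ρ ν = m * G.V ρ i := by
      rw [← hρm, div_mul_cancel₀ _ (ne_of_gt (V_pos ρ i))]
    have hsum : ∑ σ ∈ G.nbrs ρ, (G.Wf i σ ν - m * G.V σ i)
        = -(if ρ = ν then (1:ℚ) else 0) := by
      rw [Finset.sum_sub_distrib, ← Finset.mul_sum, ← hb2]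
      have e1 : ∑ σ ∈ G.nbrs ρ, G.Wf i σ ν
          = G.MM ρ ρ * G.Wf i ρ ν - (if ρ = ν then (1:ℚ) else 0) := by linarith [hb1]
      rw [e1, hWρ]
      ring
    have hterm : ∀ σ ∈ G.nbrs ρ, 0 ≤ G.Wf i σ ν - m * G.V σ i := by
      intro σ _
      by_cases hσ : σ ∈ SF
      · have hq : m ≤ G.Wf i σ ν / G.V σ i := hjmin σ hσ
        have hV := V_pos σ i
        have h2 : m * G.V σ i ≤ (G.Wf i σ ν / G.V σ i) * G.V σ i :=
          mul_le_mul_of_nonneg_right hq hV.le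
        rw [div_mul_cancel₀ _ (ne_of_gt hV)] at h2
        linarith
      · have hWσ : G.Wf i σ ν = 0 := by
          have hσs : G.Sep i ν σ := by
            by_contra hns
            exact hσ ((hmemSF σ).2 hns)
          by_cases hσi : σ = i
          · rw [hσi]; exact Wf_left i ν
          · exact Wf_eq_zero (sep_symm hσs)
        rw [hWσ]
        have hV := V_pos σ i
        nlinarith [hneg, hV]
    have hsnn : 0 ≤ ∑ σ ∈ G.nbrs ρ, (G.Wf i σ ν - m * G.V σ i) :=
      Finset.sum_nonneg hterm
    have hρν : ρ ≠ ν := by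
      intro he
      rw [if_pos he] at hsum
      linarith
    refine ⟨hρν, fun σ hadj => ?_⟩
    have hσm : σ ∈ G.nbrs ρ := nbrs_mem.2 hadj
    have hzero : G.Wf i σ ν - m * G.V σ i = 0 := by
      rw [if_neg hρν] at hsum
      have := (Finset.sum_eq_zero_iff_of_nonneg hterm).1 (by rw [hsum]; ring) σ hσm
      exact this
    have hσSF : σ ∈ SF := by
      by_contra hns
      have hWσ : G.Wf i σ ν = 0 := by
        have hσs : G.Sep i ν σ := by
          by_contra hns2
          exact hns ((hmemSF σ).2 hns2)
        by_cases hσi : σ = i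
        · rw [hσi]; exact Wf_left i ν
        · exact Wf_eq_zero (sep_symm hσs)
      rw [hWσ] at hzero
      have hV := V_pos σ i
      nlinarith [hneg, hV]
    refine ⟨hσSF, ?_⟩
    have hV := V_pos σ i
    have he : G.Wf i σ ν = m * G.V σ i := by linarith
    rw [he, mul_div_assoc, div_self (ne_of_gt hV), mul_one]
  have main : ∀ (L : ℕ) (ρ : Fin G.N) (w : G.graph.Walk ρ ν), w.length ≤ L →
      i ∉ w.support → ρ ∈ SF → G.Wf i ρ ν / G.V ρ i = m → False := by
    intro L
    induction L with
    | zero =>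
      intro ρ w hl hi hρS hρm
      cases w with
      | nil => exact (balance ν hρS hρm).1 rfl
      | cons hadj w' => rw [SimpleGraph.Walk.length_cons] at hl; omega
    | succ L IH =>
      intro ρ w hl hi hρS hρm
      cases w with
      | nil => exact (balance ν hρS hρm).1 rfl
      | @cons _ σ _ hadj w' =>
        have hσ := (balance ρ hρS hρm).2 σ (graph_adj.1 hadj)
        refine IH σ w' ?_ ?_ hσ.1 hσ.2
        · have := hl
          rw [SimpleGraph.Walk.length_cons] at this
          omega
        · intro hmem
          exact hi (by rw [SimpleGraph.Walk.support_cons]; exact List.mem_cons_of_mem _ hmem)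
  obtain ⟨w0, hw0⟩ := not_sep_sound ((hmemSF j).1 hjSF)
  exact main w0.reverse.length j w0.reverse le_rfl
    (by rwa [SimpleGraph.Walk.support_reverse, List.mem_reverse]) hjSF rfl

/-- Strict positivity of `W^{(i)}` on the same side. -/
lemma Wf_pos {i x ν : Fin G.N} (h : ¬ G.Sep i x ν) : 0 < G.Wf i x ν := by
  have hνi : i ≠ ν := ne_of_not_sep_right h
  have hbase : 0 < G.Wf i ν ν := by
    set u : Fin G.N → ℚ :=
      fun ρ => G.V i i * (if ρ = ν then 1 else 0) - G.V ν i * (if ρ = i then 1 else 0) with hu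
    have hVii := V_pos i i
    have hinner : ∀ β, (∑ ρ, u ρ * G.V ρ β) = G.V i i * G.V ν β - G.V ν i * G.V i β := by
      intro β
      have hterm : ∀ ρ ∈ Finset.univ, u ρ * G.V ρ β
          = G.V i i * ((if ρ = ν then (1:ℚ) else 0) * G.V ρ β)
            - G.V ν i * ((if ρ = i then (1:ℚ) else 0) * G.V ρ β) := by
        intro ρ _
        rw [hu]
        ring
      have e1 : ∑ ρ, (if ρ = ν then (1:ℚ) else 0) * G.V ρ β = G.V ν β := by
        simp [ite_mul]
      have e2 : ∑ ρ, (if ρ = i then (1:ℚ) else 0) * G.V ρ β = G.V i β := by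
        simp [ite_mul]
      rw [Finset.sum_congr rfl hterm, Finset.sum_sub_distrib, ← Finset.mul_sum,
        ← Finset.mul_sum, e1, e2]
    have hval : ∑ β, (∑ ρ, u ρ * G.V ρ β) * u β
        = G.V i i * (G.V i i * G.V ν ν - G.V ν i * G.V ν i) := by
      have hterm : ∀ β ∈ Finset.univ, (∑ ρ, u ρ * G.V ρ β) * u β
          = G.V i i * ((if β = ν then (1:ℚ) else 0) * (G.V i i * G.V ν β - G.V ν i * G.V i β))
            - G.V ν i * ((if β = i then (1:ℚ) else 0) * (G.V i i * G.V ν β - G.V ν i * G.V i β)) := by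
        intro β _
        rw [hinner β, hu]
        ring
      have o1 : ∑ β, (if β = ν then (1:ℚ) else 0) * (G.V i i * G.V ν β - G.V ν i * G.V i β)
          = G.V i i * G.V ν ν - G.V ν i * G.V i ν := by
        simp [ite_mul]
      have o2 : ∑ β, (if β = i then (1:ℚ) else 0) * (G.V i i * G.V ν β - G.V ν i * G.V i β)
          = G.V i i * G.V ν i - G.V ν i * G.V i i := by
        simp [ite_mul]
      rw [Finset.sum_congr rfl hterm, Finset.sum_sub_distrib, ← Finset.mul_sum,
        ← Finset.mul_sum, o1, o2, V_symm i ν]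
      ring
    have hune : u ≠ 0 := by
      intro h0
      have h1 : u ν = 0 := by rw [h0]; rfl
      have hνi' : ν ≠ i := fun he => hνi he.symm
      have h2 : u ν = G.V i i := by
        simp [hu, hνi']
      rw [h2] at h1
      exact (ne_of_gt hVii) h1
    have hq := quad_V_pos u hune
    rw [hval] at hq
    have hdet : 0 < G.V i i * G.V ν ν - G.V ν i * G.V ν i := by
      by_contra hle
      push_neg at hle
      nlinarith
    have hWeq : G.Wf i ν ν = (G.V i i * G.V ν ν - G.V ν i * G.V ν i) / G.V i i := by
      unfold Wf
      rw [V_symm i ν]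
      field_simp
    rw [hWeq]
    positivity
  obtain ⟨w0, hw0⟩ := not_sep_sound h
  have main : ∀ (L : ℕ) (z : Fin G.N) (w : G.graph.Walk z ν), w.length ≤ L →
      i ∉ w.support → 0 < G.Wf i z ν := by
    intro L
    induction L with
    | zero =>
      intro z w hl hi
      cases w with
      | nil => exact hbase
      | cons hadj w' => rw [SimpleGraph.Walk.length_cons] at hl; omega
    | succ L IH =>
      intro z w hl hi
      cases w with
      | nil => exact hbase
      | @cons _ σ _ hadj w' =>
        have hzi : z ≠ i := by
          intro he
          exact hi (by rw [SimpleGraph.Walk.support_cons, he]; exact List.mem_cons_self)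
        have hσmem : σ ∈ G.nbrs z := nbrs_mem.2 (graph_adj.1 hadj)
        have hIH : 0 < G.Wf i σ ν := by
          refine IH σ w' ?_ ?_
          · rw [SimpleGraph.Walk.length_cons] at hl
            omega
          · intro hmem
            exact hi (by rw [SimpleGraph.Walk.support_cons]; exact List.mem_cons_of_mem _ hmem)
        have hb := W_balance (i := i) (ν := ν) hzi
        have hsum : 0 < ∑ σ' ∈ G.nbrs z, G.Wf i σ' ν := by
          have hle : G.Wf i σ ν ≤ ∑ σ' ∈ G.nbrs z, G.Wf i σ' ν :=
            Finset.single_le_sum (f := fun σ' => G.Wf i σ' ν)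
              (fun σ' _ => Wf_nonneg i σ' ν) hσmem
          linarith
        have hδ : 0 ≤ (if z = ν then (1:ℚ) else 0) := by positivity
        have hMz := MM_diag_pos z
        by_contra hW
        push_neg at hW
        have : G.MM z z * G.Wf i z ν ≤ 0 := mul_nonpos_of_nonneg_of_nonpos hMz.le hW
        linarith
  exact main w0.length x w0 le_rfl hw0

end DualGraph
end
noncomputable section
namespace DualGraph
open Finset

variable {G : DualGraph}

lemma mem_pathSet {x y i : Fin G.N} :
    i ∈ G.pathSet x y ↔ G.graph.dist x i + G.graph.dist i y = G.graph.dist x y := by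
  unfold pathSet dist
  simp

lemma sep_iff_disteq {i x y : Fin G.N} :
    G.Sep i x y ↔ G.graph.dist x i + G.graph.dist i y = G.graph.dist x y :=
  ⟨disteq_of_sep, fun h w => sep_of_disteq w i h⟩

lemma mem_branch {μ i j : Fin G.N} :
    j ∈ G.branch μ i ↔ i ≠ μ ∧ j ≠ μ ∧ ¬ G.Sep μ i j := by
  unfold branch
  simp only [Finset.mem_filter, Finset.mem_univ, true_and]
  rw [show (μ ∈ G.pathSet i j) ↔ G.Sep μ i j from mem_pathSet.trans sep_iff_disteq.symm]

lemma vecMul_apply' (x : Fin G.N → ℚ) (ν : Fin G.N) :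
    (x ᵥ* G.V) ν = ∑ ρ, x ρ * G.V ρ ν := by
  simp [Matrix.vecMul, dotProduct]

lemma rhat_V (i j ν : Fin G.N) : (G.rhat i j ᵥ* G.V) ν = G.Wf i j ν := by
  rw [vecMul_apply']
  have hterm : ∀ ρ ∈ Finset.univ, G.rhat i j ρ * G.V ρ ν
      = (if ρ = j then (1:ℚ) else 0) * G.V ρ ν
        - (G.rho i j i) * ((if ρ = i then (1:ℚ) else 0) * G.V ρ ν) := by
    intro ρ _
    unfold rhat
    ring
  have e1 : ∑ ρ, (if ρ = j then (1:ℚ) else 0) * G.V ρ ν = G.V j ν := by simp [ite_mul]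
  have e2 : ∑ ρ, (if ρ = i then (1:ℚ) else 0) * G.V ρ ν = G.V i ν := by simp [ite_mul]
  rw [Finset.sum_congr rfl hterm, Finset.sum_sub_distrib, ← Finset.mul_sum, e1, e2]
  unfold Wf rho
  ring

lemma A_apply (μ : Fin G.N) (fh : Fin G.N → ℚ) (ν : Fin G.N) :
    (G.transform μ fh fh 0 ᵥ* G.V) ν
      = (fh ᵥ* G.V) ν - ∑ i ∈ G.nbrs μ, ∑ j ∈ G.branch μ i, fh j * G.Wf i j ν := by
  have ht : G.transform μ fh fh 0
      = fh - ∑ i ∈ G.nbrs μ, ∑ j ∈ G.branch μ i, fh j • G.rhat i j := by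
    unfold transform
    simp
  rw [ht, vecMul_apply']
  have hterm : ∀ ρ ∈ Finset.univ,
      (fh - ∑ i ∈ G.nbrs μ, ∑ j ∈ G.branch μ i, fh j • G.rhat i j) ρ * G.V ρ ν
      = fh ρ * G.V ρ ν
        - (∑ i ∈ G.nbrs μ, ∑ j ∈ G.branch μ i, fh j • G.rhat i j) ρ * G.V ρ ν := by
    intro ρ _
    rw [Pi.sub_apply]
    ring
  rw [Finset.sum_congr rfl hterm, Finset.sum_sub_distrib, ← vecMul_apply']
  congr 1
  have hterm2 : ∀ ρ ∈ Finset.univ,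
      (∑ i ∈ G.nbrs μ, ∑ j ∈ G.branch μ i, fh j • G.rhat i j) ρ * G.V ρ ν
      = ∑ i ∈ G.nbrs μ, ∑ j ∈ G.branch μ i, fh j * (G.rhat i j ρ * G.V ρ ν) := by
    intro ρ _
    rw [Finset.sum_apply, Finset.sum_mul]
    refine Finset.sum_congr rfl fun i _ => ?_
    rw [Finset.sum_apply, Finset.sum_mul]
    refine Finset.sum_congr rfl fun j _ => ?_
    rw [Pi.smul_apply, smul_eq_mul]
    ring
  rw [Finset.sum_congr rfl hterm2, Finset.sum_comm]
  refine Finset.sum_congr rfl fun i _ => ?_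
  rw [Finset.sum_comm]
  refine Finset.sum_congr rfl fun j _ => ?_
  rw [← Finset.mul_sum, ← vecMul_apply', rhat_V]

lemma antinef_nonneg {g : Fin G.N → ℚ} (hg : G.Antinef g) (ν : Fin G.N) : 0 ≤ g ν := by
  have hgv : (g ᵥ* (G.Pᵀ * G.P)) ᵥ* G.V = g := by
    rw [Matrix.vecMul_vecMul, show G.Pᵀ * G.P = G.MM from rfl, MM_V, Matrix.vecMul_one]
  rw [← hgv, vecMul_apply']
  exact Finset.sum_nonneg fun σ _ => mul_nonneg (hg σ) (V_pos σ ν).le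

lemma sep_of_disteq' {x y i : Fin G.N}
    (h : G.graph.dist x i + G.graph.dist i y = G.graph.dist x y) : G.Sep i x y :=
  fun w => sep_of_disteq w i h

lemma sep_branch {μ i j : Fin G.N} (hadj : G.adj μ i) (hj : j ∈ G.branch μ i) :
    G.Sep i μ j := by
  by_cases hji : j = i
  · rw [hji]; exact sep_self_right i μ
  obtain ⟨hiμ, hjμ, hnsep⟩ := mem_branch.1 hj
  have hd1 : G.graph.dist i μ = 1 :=
    SimpleGraph.dist_eq_one_iff_adj.2 (graph_adj.2 (G.adj_symm hadj))
  have hd2 : G.graph.dist μ i = 1 :=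
    SimpleGraph.dist_eq_one_iff_adj.2 (graph_adj.2 hadj)
  have hdne : G.graph.dist μ j ≠ G.graph.dist i j :=
    up1 (r := j) (graph_adj.2 hadj)
  have hns : ¬ (G.graph.dist i μ + G.graph.dist μ j = G.graph.dist i j) :=
    fun h => hnsep (sep_iff_disteq.2 h)
  have hc : G.graph.Connected := conn
  have t1 : G.graph.dist i j ≤ G.graph.dist i μ + G.graph.dist μ j := hc.dist_triangle
  have t2 : G.graph.dist μ j ≤ G.graph.dist μ i + G.graph.dist i j := hc.dist_triangle
  exact sep_of_disteq' (by omega)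

end DualGraph
end
/-- For a nonzero antinef divisor `F = fE` and an antinef divisor `G`,
`λ(G, f̂_{⟨f̂⟩}V·E; ν) ≥ λ(G, fE; ν)` with equality exactly when `d(μ,ν) ≤ 1`
or `f̂_j = 0` for every `j ∈ Γ^i_ν`, `i` being the vertex of `[μ,ν]`
adjacent to `μ`. -/
theorem stmt8 (G : DualGraph) (μ : Fin G.N) (fh : Fin G.N → ℚ)
    (hfh : fh ≠ 0) (hanti : ∀ ν, 0 ≤ fh ν)
    (g : Fin G.N → ℚ) (hg : G.Antinef g) :
    ∀ ν, G.lamDiv g (G.transform μ fh fh 0 ᵥ* G.V) ν ≥ G.lamDiv g (fh ᵥ* G.V) ν ∧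
      (G.lamDiv g (G.transform μ fh fh 0 ᵥ* G.V) ν = G.lamDiv g (fh ᵥ* G.V) ν ↔
        (G.dist μ ν ≤ 1 ∨
          ∃ i ∈ G.pathSet μ ν, G.adj μ i ∧ ∀ j ∈ G.branch i ν, fh j = 0)) := by
  intro ν
  have hc : G.graph.Connected := DualGraph.conn
  obtain ⟨j₀, hj₀ne⟩ : ∃ j₀, fh j₀ ≠ 0 := Function.ne_iff.1 hfh
  have hj₀ : 0 < fh j₀ := (hanti j₀).lt_of_ne (Ne.symm hj₀ne)
  have hnum : 0 < g ν + G.kvec ν + 1 := by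
    have h1 := DualGraph.antinef_nonneg hg ν
    have h2 := DualGraph.kvec_ge_one (G := G) ν
    linarith
  have hBpos : 0 < (fh ᵥ* G.V) ν := by
    rw [DualGraph.vecMul_apply']
    exact Finset.sum_pos' (fun j _ => mul_nonneg (hanti j) (DualGraph.V_pos j ν).le)
      ⟨j₀, Finset.mem_univ _, mul_pos hj₀ (DualGraph.V_pos j₀ ν)⟩
  have hA := DualGraph.A_apply (G := G) μ fh ν
  set T : ℚ := ∑ i ∈ G.nbrs μ, ∑ j ∈ G.branch μ i, fh j * G.Wf i j ν with hTdef
  have key : 0 ≤ T ∧ 0 < (fh ᵥ* G.V) ν - T ∧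
      (T = 0 ↔ (G.dist μ ν ≤ 1 ∨
        ∃ i ∈ G.pathSet μ ν, G.adj μ i ∧ ∀ j ∈ G.branch i ν, fh j = 0)) := by
    by_cases hνμ : ν = μ
    · subst hνμ
      have hT0 : T = 0 := by
        rw [hTdef]
        refine Finset.sum_eq_zero fun i hi => ?_
        refine Finset.sum_eq_zero fun j hj => ?_
        have hadj : G.adj ν i := DualGraph.nbrs_mem.1 hi
        rw [DualGraph.Wf_eq_zero (DualGraph.sep_symm (DualGraph.sep_branch hadj hj)), mul_zero]
      refine ⟨by rw [hT0], by rw [hT0, sub_zero]; exact hBpos, ?_⟩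
      constructor
      · intro _
        left
        show G.graph.dist ν ν ≤ 1
        rw [SimpleGraph.dist_self]
        omega
      · intro _
        exact hT0
    · -- ν ≠ μ
      have hμν : μ ≠ ν := Ne.symm hνμ
      have hdpos : 0 < G.graph.dist μ ν := hc.pos_dist_of_ne hμν
      obtain ⟨i₀, hadj₀, hd₀⟩ := DualGraph.exists_parent (G := G) hμν
      have hadj₀' : G.adj μ i₀ := DualGraph.graph_adj.1 hadj₀
      have hi₀nbrs : i₀ ∈ G.nbrs μ := DualGraph.nbrs_mem.2 hadj₀'
      have hdμi₀ : G.graph.dist μ i₀ = 1 := SimpleGraph.dist_eq_one_iff_adj.2 hadj₀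
      have hzero_i : ∀ i ∈ G.nbrs μ, i ≠ i₀ →
          ∑ j ∈ G.branch μ i, fh j * G.Wf i j ν = 0 := by
        intro i hi hne
        have hadji : G.adj μ i := DualGraph.nbrs_mem.1 hi
        have hdμi : G.graph.dist μ i = 1 :=
          SimpleGraph.dist_eq_one_iff_adj.2 (DualGraph.graph_adj.2 hadji)
        have hnsepμν : ¬ G.Sep i μ ν := by
          intro hs
          have hdeq := DualGraph.disteq_of_sep hs
          exact hne (DualGraph.up2 hμν (DualGraph.graph_adj.2 hadji) hadj₀ (by omega) hd₀)
        refine Finset.sum_eq_zero fun j hj => ?_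
        have hsep : G.Sep i μ j := DualGraph.sep_branch hadji hj
        have hsepjν : G.Sep i j ν := by
          by_contra hns
          have hnν : ¬ G.Sep i ν μ := fun hs => hnsepμν (DualGraph.sep_symm hs)
          exact (DualGraph.not_sep_trans hns hnν) (DualGraph.sep_symm hsep)
        rw [DualGraph.Wf_eq_zero hsepjν, mul_zero]
      have hTsingle : T = ∑ j ∈ G.branch μ i₀, fh j * G.Wf i₀ j ν := by
        rw [hTdef]
        exact Finset.sum_eq_single_of_mem i₀ hi₀nbrs (fun i hi hne => hzero_i i hi hne)
      have hTnn : 0 ≤ T := by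
        rw [hTsingle]
        exact Finset.sum_nonneg fun j _ => mul_nonneg (hanti j) (DualGraph.Wf_nonneg i₀ j ν)
      have hApos : 0 < (fh ᵥ* G.V) ν - T := by
        rw [hTsingle, DualGraph.vecMul_apply',
          ← Finset.sum_add_sum_compl (G.branch μ i₀) (fun j => fh j * G.V j ν)]
        have hsplit : ∑ j ∈ G.branch μ i₀, fh j * G.V j ν
              + ∑ j ∈ (G.branch μ i₀)ᶜ, fh j * G.V j ν
              - ∑ j ∈ G.branch μ i₀, fh j * G.Wf i₀ j ν
            = ∑ j ∈ G.branch μ i₀, fh j * (G.V j i₀ * G.V i₀ ν / G.V i₀ i₀)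
              + ∑ j ∈ (G.branch μ i₀)ᶜ, fh j * G.V j ν := by
          rw [add_sub_right_comm, ← Finset.sum_sub_distrib]
          congr 1
          refine Finset.sum_congr rfl fun j _ => ?_
          unfold DualGraph.Wf
          ring
        rw [hsplit]
        have hnn1 : ∀ j ∈ G.branch μ i₀, 0 ≤ fh j * (G.V j i₀ * G.V i₀ ν / G.V i₀ i₀) := by
          intro j _
          have := DualGraph.V_pos (G := G) j i₀
          have := DualGraph.V_pos (G := G) i₀ ν
          have := DualGraph.V_pos (G := G) i₀ i₀
          have := hanti j
          positivity
        have hnn2 : ∀ j ∈ (G.branch μ i₀)ᶜ, 0 ≤ fh j * G.V j ν := fun j _ =>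
          mul_nonneg (hanti j) (DualGraph.V_pos j ν).le
        by_cases hj₀b : j₀ ∈ G.branch μ i₀
        · have hp1 : 0 < ∑ j ∈ G.branch μ i₀, fh j * (G.V j i₀ * G.V i₀ ν / G.V i₀ i₀) := by
            refine Finset.sum_pos' hnn1 ⟨j₀, hj₀b, ?_⟩
            have h1 := DualGraph.V_pos (G := G) j₀ i₀
            have h2 := DualGraph.V_pos (G := G) i₀ ν
            have h3 := DualGraph.V_pos (G := G) i₀ i₀
            positivity
          have hp2 : 0 ≤ ∑ j ∈ (G.branch μ i₀)ᶜ, fh j * G.V j ν := Finset.sum_nonneg hnn2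
          linarith
        · have hp1 : 0 ≤ ∑ j ∈ G.branch μ i₀, fh j * (G.V j i₀ * G.V i₀ ν / G.V i₀ i₀) :=
            Finset.sum_nonneg hnn1
          have hp2 : 0 < ∑ j ∈ (G.branch μ i₀)ᶜ, fh j * G.V j ν := by
            refine Finset.sum_pos' hnn2 ⟨j₀, Finset.mem_compl.2 hj₀b, ?_⟩
            exact mul_pos hj₀ (DualGraph.V_pos j₀ ν)
          linarith
      refine ⟨hTnn, hApos, ?_⟩
      by_cases hνi₀ : ν = i₀
      · have hd1 : G.graph.dist μ ν = 1 := by rw [hνi₀]; exact hdμi₀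
        have hT0 : T = 0 := by
          rw [hTsingle]
          refine Finset.sum_eq_zero fun j hj => ?_
          rw [hνi₀, DualGraph.Wf_right, mul_zero]
        constructor
        · intro _
          left
          show G.graph.dist μ ν ≤ 1
          omega
        · intro _
          exact hT0
      · -- main case : dist ≥ 2
        have hdi₀ν : 0 < G.graph.dist i₀ ν := hc.pos_dist_of_ne (fun h => hνi₀ h.symm)
        have hd2 : 2 ≤ G.graph.dist μ ν := by omega
        have hsepμν : G.Sep i₀ μ ν := DualGraph.sep_of_disteq' (by omega)
        have hdi₀μ : G.graph.dist i₀ μ = 1 :=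
          SimpleGraph.dist_eq_one_iff_adj.2 hadj₀.symm
        have hνbr : ν ∈ G.branch μ i₀ := by
          refine DualGraph.mem_branch.2 ⟨(G.adj_symm hadj₀').1, hνμ, ?_⟩
          intro hs
          have := DualGraph.disteq_of_sep hs
          omega
        have hfc : ∀ j, j ∈ G.branch i₀ ν ↔ (j ∈ G.branch μ i₀ ∧ ¬ G.Sep i₀ j ν) := by
          intro j
          constructor
          · intro hj
            obtain ⟨hνi₀', hji₀, hnsep⟩ := DualGraph.mem_branch.1 hj
            have hnsep' : ¬ G.Sep i₀ j ν := fun hs => hnsep (DualGraph.sep_symm hs)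
            refine ⟨DualGraph.mem_branch.2 ⟨(G.adj_symm hadj₀').1, ?_, ?_⟩, hnsep'⟩
            · intro hjμ
              rw [hjμ] at hnsep
              exact hnsep (DualGraph.sep_symm hsepμν)
            · intro hμs
              obtain ⟨a, ha⟩ := DualGraph.not_sep_sound hnsep
              by_cases hμa : μ ∈ a.support
              · have hpre : i₀ ∉ (a.takeUntil μ hμa).support :=
                  fun hmem => ha (SimpleGraph.Walk.support_takeUntil_subset a hμa hmem)
                exact hpre ((DualGraph.sep_symm hsepμν) (a.takeUntil μ hμa))
              · obtain ⟨hi₀μ', hνμ'', hnμ⟩ := DualGraph.mem_branch.1 hνbr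
                obtain ⟨b, hb⟩ := DualGraph.not_sep_sound hnμ
                have hμm : μ ∈ (b.append a).support := hμs (b.append a)
                rw [SimpleGraph.Walk.support_append, List.mem_append] at hμm
                rcases hμm with h' | h'
                · exact hb h'
                · exact hμa ((List.tail_sublist _).subset h')
          · rintro ⟨hjb, hnsep⟩
            exact DualGraph.mem_branch.2 ⟨hνi₀,
              Ne.symm (DualGraph.ne_of_not_sep_left hnsep),
              fun hs => hnsep (DualGraph.sep_symm hs)⟩
        have hiffT : T = 0 ↔ ∀ j ∈ G.branch i₀ ν, fh j = 0 := by
          rw [hTsingle]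
          constructor
          · intro hT j hj
            obtain ⟨hjb, hns⟩ := (hfc j).1 hj
            have hall := (Finset.sum_eq_zero_iff_of_nonneg
              (fun j _ => mul_nonneg (hanti j) (DualGraph.Wf_nonneg i₀ j ν))).1 hT j hjb
            rcases mul_eq_zero.1 hall with h' | h'
            · exact h'
            · exact absurd h' (ne_of_gt (DualGraph.Wf_pos hns))
          · intro hall
            refine Finset.sum_eq_zero fun j hj => ?_
            by_cases hns : G.Sep i₀ j ν
            · rw [DualGraph.Wf_eq_zero hns, mul_zero]
            · rw [hall j ((hfc j).2 ⟨hj, hns⟩), zero_mul]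
        rw [hiffT]
        constructor
        · intro hall
          right
          refine ⟨i₀, DualGraph.mem_pathSet.2 (by omega), hadj₀', hall⟩
        · intro h
          rcases h with h | ⟨i, hipath, hiadj, hall⟩
          · exfalso
            have : G.graph.dist μ ν ≤ 1 := h
            omega
          · have hieq : i = i₀ := by
              have hpq := DualGraph.mem_pathSet.1 hipath
              have hdμi : G.graph.dist μ i = 1 :=
                SimpleGraph.dist_eq_one_iff_adj.2 (DualGraph.graph_adj.2 hiadj)
              exact DualGraph.up2 hμν (DualGraph.graph_adj.2 hiadj) hadj₀ (by omega) hd₀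
            rw [hieq] at hall
            exact hall
  obtain ⟨hTnn, hApos, hiii⟩ := key
  constructor
  · rw [ge_iff_le]
    unfold DualGraph.lamDiv
    rw [hA, div_le_div_iff₀ hBpos hApos]
    have hle : (fh ᵥ* G.V) ν - T ≤ (fh ᵥ* G.V) ν := by linarith
    exact mul_le_mul_of_nonneg_left hle hnum.le
  · unfold DualGraph.lamDiv
    rw [hA, div_eq_div_iff (ne_of_gt hApos) (ne_of_gt hBpos)]
    constructor
    · intro h
      have hBT : (fh ᵥ* G.V) ν = (fh ᵥ* G.V) ν - T :=
        mul_left_cancel₀ (ne_of_gt hnum) h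
      exact hiii.1 (by linarith)
    · intro h
      rw [hiii.2 h, sub_zero]
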